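/- Fix q > 0 and a, b > 0 with a² + b² = 1, and define f^n_1 = a^n, f^n_{2^ℓ} = a^{n−ℓ} b for 1 ≤ ℓ ≤ n, f^n_k = 0 otherwise. Let ‖f^n‖_{H^{-q}}² = Σ_{k≥1} k^{-2q}|f^n_k|² and P₁ the projection onto mode k = 1. If a > 2^{-q}, then lim_{n→∞} ‖P₁ f^n‖²_{H^{-q}}/‖f^n‖²_{H^{-q}} = (1 + b²/(a²2^{2q}−1))^{-1} > 0 (so f^n is q-recurrent), while if a ≤ 2^{-q} the limit is 0. -/

import Mathlib

open Filter Finset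

theorem stmt17 (q a b : ℝ) (hq : 0 < q) (ha : 0 < a) (hb : 0 < b)
    (hab : a ^ 2 + b ^ 2 = 1)
    (f : ℕ → ℕ → ℂ)
    (hf1 : ∀ n, f n 1 = ((a : ℂ)) ^ n)
    (hf2 : ∀ n ℓ, 1 ≤ ℓ → ℓ ≤ n → f n (2 ^ ℓ) = ((a : ℂ)) ^ (n - ℓ) * (b : ℂ))
    (hf0 : ∀ n k, k ≠ 1 → (∀ ℓ, 1 ≤ ℓ → ℓ ≤ n → k ≠ 2 ^ ℓ) → f n k = 0) :
    ((2 : ℝ) ^ (-q) < a →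
      Filter.Tendsto
        (fun n => ‖f n 1‖ ^ 2 /
          ∑' k : {k : ℕ // 1 ≤ k}, ((k.1 : ℝ)) ^ (-(2 * q)) * ‖f n k.1‖ ^ 2)
        Filter.atTop (nhds (1 + b ^ 2 / (a ^ 2 * (2 : ℝ) ^ (2 * q) - 1))⁻¹) ∧
      0 < (1 + b ^ 2 / (a ^ 2 * (2 : ℝ) ^ (2 * q) - 1))⁻¹) ∧
    (a ≤ (2 : ℝ) ^ (-q) →
      Filter.Tendsto
        (fun n => ‖f n 1‖ ^ 2 /
          ∑' k : {k : ℕ // 1 ≤ k}, ((k.1 : ℝ)) ^ (-(2 * q)) * ‖f n k.1‖ ^ 2)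
        Filter.atTop (nhds 0)) := by
  set d : ℝ := (2:ℝ) ^ (2*q) with hd
  have hdpos : 0 < d := Real.rpow_pos_of_pos (by norm_num) _
  set c : ℝ := (a^2 * d)⁻¹ with hc
  have hcpos : 0 < c := by positivity
  have hdinv : d⁻¹ = (2:ℝ) ^ (-(2*q)) := by
    rw [hd, ← Real.rpow_neg (by norm_num)]
  have hsq : ((2:ℝ) ^ (-q)) ^ 2 = d⁻¹ := by
    rw [hdinv, ← Real.rpow_natCast ((2:ℝ)^(-q)) 2, ← Real.rpow_mul (by norm_num)]
    norm_num; ring_nf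
  have h2pow : ∀ m : ℕ, ((2:ℝ) ^ m) ^ (-(2*q)) = (d⁻¹) ^ m := by
    intro m
    rw [← Real.rpow_natCast (2:ℝ) m, ← Real.rpow_mul (by norm_num), mul_comm,
      Real.rpow_mul (by norm_num), ← hdinv, Real.rpow_natCast]
  -- the tsum formula
  have hsum : ∀ n, (∑' k : {k : ℕ // 1 ≤ k}, ((k.1 : ℝ)) ^ (-(2 * q)) * ‖f n k.1‖ ^ 2)
      = (a^n)^2 * (1 + b^2 * ∑ ℓ ∈ Finset.range n, c ^ (ℓ+1)) := by
    intro n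
    set e : ℕ → {k : ℕ // 1 ≤ k} := fun ℓ => ⟨2 ^ ℓ, Nat.one_le_two_pow⟩ with he
    have hinj : Function.Injective e := by
      intro x y h
      exact Nat.pow_right_injective le_rfl (congrArg Subtype.val h)
    rw [tsum_eq_sum (s := (Finset.range (n+1)).image e) ?_]
    · rw [Finset.sum_image (fun x _ y _ h => hinj h)]
      have hterm : ∀ ℓ ∈ Finset.range n,
          (((e (ℓ+1)).1 : ℝ)) ^ (-(2 * q)) * ‖f n (e (ℓ+1)).1‖ ^ 2
            = (a^n)^2 * b^2 * c ^ (ℓ+1) := by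
        intro ℓ hℓ
        have hℓn : ℓ + 1 ≤ n := Nat.succ_le_of_lt (Finset.mem_range.mp hℓ)
        have hcast : (((e (ℓ+1)).1 : ℝ)) = (2:ℝ) ^ (ℓ+1) := by
          simp [he]
        rw [hcast, hf2 n (ℓ+1) (Nat.le_add_left 1 ℓ) hℓn, h2pow]
        have hnorm : ‖((a:ℂ)) ^ (n - (ℓ+1)) * (b:ℂ)‖ = a ^ (n - (ℓ+1)) * b := by
          rw [norm_mul, norm_pow, Complex.norm_real, Complex.norm_real,
            Real.norm_eq_abs, Real.norm_eq_abs, abs_of_pos ha, abs_of_pos hb]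
        rw [hnorm]
        have key : a ^ (n - (ℓ+1)) * a ^ (ℓ+1) = a ^ n := pow_sub_mul_pow a hℓn
        have hane : a ≠ 0 := ne_of_gt ha
        have hdne : d ≠ 0 := ne_of_gt hdpos
        rw [hc, inv_pow, ← key]
        have hane2 : a ^ (ℓ+1) ≠ 0 := pow_ne_zero _ hane
        have hdne2 : d ^ (ℓ+1) ≠ 0 := pow_ne_zero _ hdne
        field_simp
        ring_nf
        rw [show d * d ^ ℓ * a ^ 2 * a ^ (ℓ * 2) * d⁻¹ * d⁻¹ ^ ℓ * a⁻¹ ^ 2 * a⁻¹ ^ (ℓ * 2)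
          = (d * d⁻¹) * (d * d⁻¹) ^ ℓ * (a * a⁻¹) ^ 2 * (a * a⁻¹) ^ (ℓ * 2) by ring,
          mul_inv_cancel₀ hdne, mul_inv_cancel₀ hane]
        simp
      rw [Finset.sum_range_succ' _ n, Finset.sum_congr rfl hterm]
      have h0 : (((e 0).1 : ℝ)) ^ (-(2 * q)) * ‖f n (e 0).1‖ ^ 2 = (a^n)^2 := by
        simp only [he, pow_zero, Nat.cast_one]
        rw [Real.one_rpow, hf1, norm_pow, Complex.norm_real, Real.norm_eq_abs,
          abs_of_pos ha]
        ring
      rw [h0, ← Finset.mul_sum]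
      ring
    · intro k hk
      have hne1 : k.1 ≠ 1 := by
        intro h1
        exact hk (Finset.mem_image.mpr ⟨0, Finset.mem_range.mpr (Nat.succ_pos n),
          Subtype.ext (by simp only [he, pow_zero]; exact h1.symm)⟩)
      have hnep : ∀ ℓ, 1 ≤ ℓ → ℓ ≤ n → k.1 ≠ 2 ^ ℓ := by
        intro ℓ h1 h2 hkeq
        exact hk (Finset.mem_image.mpr ⟨ℓ, Finset.mem_range.mpr (Nat.lt_succ_of_le h2),
          Subtype.ext (by simp [he, hkeq])⟩)
      rw [hf0 n k.1 hne1 hnep]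
      simp
  have hnorm1 : ∀ n, ‖f n 1‖ ^ 2 = (a^n)^2 := by
    intro n
    rw [hf1, norm_pow, Complex.norm_real, Real.norm_eq_abs, abs_of_pos ha]
  have hTpos : ∀ n, 0 < 1 + b^2 * ∑ ℓ ∈ Finset.range n, c ^ (ℓ+1) := by
    intro n
    have : 0 ≤ ∑ ℓ ∈ Finset.range n, c ^ (ℓ+1) :=
      Finset.sum_nonneg fun ℓ _ => by positivity
    nlinarith
  have hratio : ∀ n, ‖f n 1‖ ^ 2 /
      (∑' k : {k : ℕ // 1 ≤ k}, ((k.1 : ℝ)) ^ (-(2 * q)) * ‖f n k.1‖ ^ 2)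
      = (1 + b^2 * ∑ ℓ ∈ Finset.range n, c ^ (ℓ+1))⁻¹ := by
    intro n
    rw [hsum n, hnorm1 n]
    exact div_mul_cancel_left₀ (by positivity) _
  constructor
  · intro hlt
    have hgt1 : 1 < a^2 * d := by
      have h1 : ((2:ℝ)^(-q))^2 < a^2 := by
        have h2 : 0 < (2:ℝ)^(-q) := Real.rpow_pos_of_pos (by norm_num) _
        nlinarith
      rw [hsq] at h1
      calc (1:ℝ) = d⁻¹ * d := by field_simp
        _ < a^2 * d := by nlinarith
    have hc1 : c < 1 := by
      have h0 : (a^2*d) * (a^2*d)⁻¹ = 1 := mul_inv_cancel₀ (by positivity)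
      rw [hc]
      nlinarith [inv_pos.mpr (show (0:ℝ) < a^2*d by positivity)]
    have hsub : (0:ℝ) < a^2*d - 1 := by linarith
    have hgeo : Tendsto (fun n => ∑ ℓ ∈ Finset.range n, c ^ ℓ) atTop (nhds (1-c)⁻¹) :=
      (hasSum_geometric_of_lt_one hcpos.le hc1).tendsto_sum_nat
    have hshift : ∀ n : ℕ, ∑ ℓ ∈ Finset.range n, c ^ (ℓ+1)
        = c * ∑ ℓ ∈ Finset.range n, c ^ ℓ := by
      intro n
      rw [Finset.mul_sum]
      exact Finset.sum_congr rfl fun ℓ _ => by ring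
    have hTlim : Tendsto (fun n => 1 + b^2 * ∑ ℓ ∈ Finset.range n, c ^ (ℓ+1)) atTop
        (nhds (1 + b^2 * (c * (1-c)⁻¹))) := by
      simp only [hshift]
      exact tendsto_const_nhds.add (tendsto_const_nhds.mul (tendsto_const_nhds.mul hgeo))
    have hval : 1 + b^2 * (c * (1-c)⁻¹) = 1 + b^2 / (a^2 * d - 1) := by
      rw [hc]
      have h1 : a^2 * d ≠ 0 := by positivity
      have h2 : a^2 * d - 1 ≠ 0 := ne_of_gt hsub
      have h3 : 1 - (a^2*d)⁻¹ ≠ 0 := by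
        have : (a^2*d) * (1 - (a^2*d)⁻¹) = a^2*d - 1 := by field_simp
        intro h; rw [h, mul_zero] at this; exact h2 this.symm
      field_simp
    have hLpos : 0 < 1 + b^2 / (a^2 * d - 1) := by positivity
    constructor
    · have hgoal : Tendsto (fun n => (1 + b^2 * ∑ ℓ ∈ Finset.range n, c ^ (ℓ+1))⁻¹) atTop
          (nhds (1 + b^2 / (a^2 * d - 1))⁻¹) := by
        rw [← hval]
        exact hTlim.inv₀ (by rw [hval]; exact ne_of_gt hLpos)
      simpa only [hratio] using hgoal
    · exact inv_pos.mpr hLpos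
  · intro hle
    have hle1 : a^2 * d ≤ 1 := by
      have h1 : a^2 ≤ ((2:ℝ)^(-q))^2 := by
        have h2 : 0 < (2:ℝ)^(-q) := Real.rpow_pos_of_pos (by norm_num) _
        nlinarith
      rw [hsq] at h1
      calc a^2 * d ≤ d⁻¹ * d := by nlinarith
        _ = 1 := by field_simp
    have hc1 : 1 ≤ c := by
      have h0 : (a^2*d) * (a^2*d)⁻¹ = 1 := mul_inv_cancel₀ (by positivity)
      rw [hc]
      nlinarith [inv_pos.mpr (show (0:ℝ) < a^2*d by positivity)]
    have h1 : Tendsto (fun n : ℕ => 1 + b^2 * (n:ℝ)) atTop atTop := by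
      apply tendsto_atTop_add_const_left
      exact Tendsto.const_mul_atTop (by positivity) tendsto_natCast_atTop_atTop
    have hmono : ∀ n : ℕ, 1 + b^2 * (n:ℝ)
        ≤ 1 + b^2 * ∑ ℓ ∈ Finset.range n, c ^ (ℓ+1) := by
      intro n
      have : (n:ℝ) ≤ ∑ ℓ ∈ Finset.range n, c ^ (ℓ+1) := by
        calc (n:ℝ) = ∑ _ℓ ∈ Finset.range n, (1:ℝ) := by simp
          _ ≤ _ := Finset.sum_le_sum fun ℓ _ => one_le_pow₀ hc1
      nlinarith
    have hTbig : Tendsto (fun n => 1 + b^2 * ∑ ℓ ∈ Finset.range n, c ^ (ℓ+1)) atTop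
        atTop := tendsto_atTop_mono hmono h1
    have hgoal := hTbig.inv_tendsto_atTop
    simpa only [hratio, Pi.inv_def] using hgoal
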